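/- For a weak contact metric structure (φ,Q,ξ,η,g) on M, the vector field ξ is Killing if and only if the tensor N⁽³⁾ = £_ξφ vanishes; that is, ξ(g(X,Y)) = g([ξ,X],Y) + g(X,[ξ,Y]) holds for all smooth vector fields X,Y if and only if [ξ,φX] = φ[ξ,X] holds for all smooth vector fields X. -/

import Mathlib

open scoped Manifold

noncomputable section

/-- Smooth vector fields on a manifold `M`, modelled as derivations of the algebra of smooth
real-valued functions on `M`. -/
abbrev VectorField {E : Type*} [NormedAddCommGroup E] [NormedSpace ℝ E]
    {H : Type*} [TopologicalSpace H] (I : ModelWithCorners ℝ E H)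
    (M : Type*) [TopologicalSpace M] [ChartedSpace H M] :=
  Derivation ℝ C^(⊤ : ℕ∞)⟮I, M; ℝ⟯ C^(⊤ : ℕ∞)⟮I, M; ℝ⟯

variable {E : Type*} [NormedAddCommGroup E] [NormedSpace ℝ E]
  {H : Type*} [TopologicalSpace H] {I : ModelWithCorners ℝ E H}
  {M : Type*} [TopologicalSpace M] [ChartedSpace H M]

/-- `dη(X,Y) = ½ (X(η(Y)) - Y(η(X)) - η([X,Y]))`. -/
def dEta (η : VectorField I M →ₗ[C^(⊤ : ℕ∞)⟮I, M; ℝ⟯] C^(⊤ : ℕ∞)⟮I, M; ℝ⟯)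
    (X Y : VectorField I M) : C^(⊤ : ℕ∞)⟮I, M; ℝ⟯ :=
  (2 : ℝ)⁻¹ • (X (η Y) - Y (η X) - η ⁅X, Y⁆)

/-- The Nijenhuis torsion `[φ,φ](X,Y) = φ²[X,Y] + [φX,φY] - φ[φX,Y] - φ[X,φY]`. -/
def nijenhuis (φ : VectorField I M → VectorField I M) (X Y : VectorField I M) :
    VectorField I M :=
  φ (φ ⁅X, Y⁆) + ⁅φ X, φ Y⁆ - φ ⁅φ X, Y⁆ - φ ⁅X, φ Y⁆

/-- `N⁽¹⁾(X,Y) = [φ,φ](X,Y) + 2 dη(X,Y) Qξ`. -/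
def N1 (φ Q : VectorField I M →ₗ[C^(⊤ : ℕ∞)⟮I, M; ℝ⟯] VectorField I M)
    (ξ : VectorField I M) (η : VectorField I M →ₗ[C^(⊤ : ℕ∞)⟮I, M; ℝ⟯] C^(⊤ : ℕ∞)⟮I, M; ℝ⟯)
    (X Y : VectorField I M) : VectorField I M :=
  nijenhuis ⇑φ X Y + ((2 : ℝ) • dEta η X Y) • Q ξ

/-- `N⁽²⁾(X,Y) = (φX)(η(Y)) - η([φX,Y]) - (φY)(η(X)) + η([φY,X])`. -/
def N2 (φ : VectorField I M →ₗ[C^(⊤ : ℕ∞)⟮I, M; ℝ⟯] VectorField I M)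
    (η : VectorField I M →ₗ[C^(⊤ : ℕ∞)⟮I, M; ℝ⟯] C^(⊤ : ℕ∞)⟮I, M; ℝ⟯)
    (X Y : VectorField I M) : C^(⊤ : ℕ∞)⟮I, M; ℝ⟯ :=
  (φ X) (η Y) - η ⁅φ X, Y⁆ - (φ Y) (η X) + η ⁅φ Y, X⁆

/-- Leibniz rule for the Lie bracket of vector fields with respect to
multiplication by a smooth function. -/
lemma bracket_fun_smul (X Y : VectorField I M) (f : C^(⊤ : ℕ∞)⟮I, M; ℝ⟯) :
    ⁅X, f • Y⁆ = (X f) • Y + f • ⁅X, Y⁆ := by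
  apply Derivation.ext; intro a
  simp only [Derivation.commutator_apply, Derivation.add_apply, Derivation.smul_apply,
    smul_eq_mul, Derivation.leibniz]
  ring

set_option maxHeartbeats 1000000 in
theorem weak_contact_killing_iff_N3_vanishes
    [FiniteDimensional ℝ E] [I.Boundaryless] [IsManifold I (⊤ : ℕ∞) M]
    (n : ℕ) (hn : 1 ≤ n) (hdim : Module.finrank ℝ E = 2 * n + 1)
    (φ Q : VectorField I M →ₗ[C^(⊤ : ℕ∞)⟮I, M; ℝ⟯] VectorField I M)
    (hQ : Function.Bijective Q)
    (ξ : VectorField I M)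
    (η : VectorField I M →ₗ[C^(⊤ : ℕ∞)⟮I, M; ℝ⟯] C^(⊤ : ℕ∞)⟮I, M; ℝ⟯)
    (g : VectorField I M →ₗ[C^(⊤ : ℕ∞)⟮I, M; ℝ⟯] VectorField I M →ₗ[C^(⊤ : ℕ∞)⟮I, M; ℝ⟯] C^(⊤ : ℕ∞)⟮I, M; ℝ⟯)
    (ν : ℝ) (hν : 0 < ν)
    (hφφ : ∀ X, φ (φ X) = -(Q X) + η X • Q ξ)
    (hηξ : η ξ = 1)
    (hQξ : Q ξ = ν • ξ)
    (hD : ∀ X, η X = 0 → η (φ X) = 0)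
    (hg_symm : ∀ X Y, g X Y = g Y X)
    (hg_pos : ∀ X (x : M), 0 ≤ g X X x)
    (hg_def : ∀ X, g X X = 0 → X = 0)
    (hcompat : ∀ X Y, g (φ X) (φ Y) = g X (Q Y) - η X * η (Q Y))
    (hcontact : ∀ X Y, g X (φ Y) = dEta η X Y)
    :
    (∀ X Y, ξ (g X Y) = g ⁅ξ, X⁆ Y + g X ⁅ξ, Y⁆) ↔ (∀ X, ⁅ξ, φ X⁆ = φ ⁅ξ, X⁆) := by
  have half_ne : ((2:ℝ)⁻¹ : ℝ) ≠ 0 := by norm_num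
  -- antisymmetry of dEta
  have hanti : ∀ X Y : VectorField I M, dEta η X Y = - dEta η Y X := by
    intro X Y
    simp only [dEta]
    rw [← lie_skew X Y, map_neg, ← smul_neg]
    congr 1
    abel
  -- φ ξ = 0
  have hφξ2 : φ (φ ξ) = 0 := by
    rw [hφφ ξ, hηξ, one_smul]; abel
  have hφξ : φ ξ = 0 := by
    apply hg_def
    have h1 : g (φ ξ) (φ ξ) = dEta η (φ ξ) ξ := hcontact _ _
    have h3 : g ξ (φ (φ ξ)) = dEta η ξ (φ ξ) := hcontact _ _
    rw [hφξ2, map_zero] at h3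
    rw [h1, hanti (φ ξ) ξ, ← h3, neg_zero]
  -- the Lie derivative of η along ξ vanishes
  have hLη : ∀ Z : VectorField I M, ξ (η Z) = η ⁅ξ, Z⁆ := by
    intro Z
    have h := hcontact Z ξ
    rw [hφξ, map_zero] at h
    simp only [dEta] at h
    rw [hηξ, Derivation.map_one_eq_zero, ← lie_skew Z ξ, map_neg] at h
    have h3 := (smul_eq_zero.mp h.symm).resolve_left half_ne
    linear_combination -h3
  -- g X ξ = η X
  have hηg : ∀ X, g X ξ = η X := by
    intro X
    have h := hcompat X ξ
    rw [hφξ, map_zero, hQξ, (g X).map_smul_of_tower, η.map_smul_of_tower, hηξ] at h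
    have hb : η X * ν • (1 : C^(⊤ : ℕ∞)⟮I, M; ℝ⟯) = ν • η X := by
      rw [mul_smul_comm, mul_one]
    rw [hb] at h
    have h2 : ν • (g X ξ - η X) = 0 := by rw [smul_sub]; exact h.symm
    have h3 := (smul_eq_zero.mp h2).resolve_left hν.ne'
    exact sub_eq_zero.mp h3
  -- the Lie derivative of dEta along ξ vanishes
  have hLdη : ∀ Y X : VectorField I M,
      ξ (dEta η Y X) = dEta η ⁅ξ, Y⁆ X + dEta η Y ⁅ξ, X⁆ := by
    intro Y X
    have hja : η ⁅⁅ξ, Y⁆, X⁆ = ξ (η ⁅Y, X⁆) - η ⁅Y, ⁅ξ, X⁆⁆ := by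
      have h : (⁅⁅ξ, Y⁆, X⁆ : VectorField I M) = ⁅ξ, ⁅Y, X⁆⁆ - ⁅Y, ⁅ξ, X⁆⁆ := by
        rw [LieRing.leibniz_lie ξ Y X]; abel
      rw [h, map_sub, hLη]
    simp only [dEta]
    rw [ξ.map_smul_of_tower, ← smul_add]
    congr 1
    rw [map_sub, map_sub, hja, Derivation.commutator_apply, Derivation.commutator_apply,
      ← hLη Y, ← hLη X]
    ring
  constructor
  · -- Killing → N³ = 0
    intro hK X
    have key : ∀ Y, g Y ⁅ξ, φ X⁆ = g Y (φ ⁅ξ, X⁆) := by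
      intro Y
      have h1 := hK Y (φ X)
      rw [hcontact Y X, hLdη Y X, hcontact ⁅ξ, Y⁆ X] at h1
      have h2 := add_left_cancel h1
      rw [← hcontact Y ⁅ξ, X⁆] at h2
      exact h2.symm
    set A := (⁅ξ, φ X⁆ : VectorField I M) with hA
    set B := φ ⁅ξ, X⁆ with hB
    have hDD : g (A - B) (A - B) = 0 := by
      have h2 : g (A - B) (A - B) = g (A - B) A - g (A - B) B := map_sub (g (A - B)) A B
      rw [h2, key (A - B), sub_self]
    have := hg_def _ hDD
    exact sub_eq_zero.mp this
  · -- N³ = 0 → Killing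
    intro hN X Y
    have hφpair : ∀ X W : VectorField I M,
        ξ (g X (φ W)) = g ⁅ξ, X⁆ (φ W) + g X ⁅ξ, φ W⁆ := by
      intro X W
      rw [hcontact X W, hLdη X W, ← hcontact ⁅ξ, X⁆ W, ← hcontact X ⁅ξ, W⁆, ← hN W]
    have hξpair : ∀ X : VectorField I M, ξ (g X ξ) = g ⁅ξ, X⁆ ξ := by
      intro X
      rw [hηg X, hηg ⁅ξ, X⁆, hLη]
    obtain ⟨Z, rfl⟩ := hQ.2 Y
    set f : C^(⊤ : ℕ∞)⟮I, M; ℝ⟯ := η Z * (ν • (1 : C^(⊤ : ℕ∞)⟮I, M; ℝ⟯)) with hf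
    have hQZ : Q Z = f • ξ - φ (φ Z) := by
      have h1 : Q Z = η Z • Q ξ - φ (φ Z) := by rw [hφφ Z]; abel
      have h2 : f • ξ = η Z • (ν • ξ) := by rw [hf, mul_smul, smul_assoc, one_smul]
      rw [h1, hQξ, h2]
    rw [hQZ]
    have e1 : g X (f • ξ - φ (φ Z)) = f * g X ξ - g X (φ (φ Z)) := by
      rw [map_sub, map_smul, smul_eq_mul]
    have e2 : g ⁅ξ, X⁆ (f • ξ - φ (φ Z)) = f * g ⁅ξ, X⁆ ξ - g ⁅ξ, X⁆ (φ (φ Z)) := by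
      rw [map_sub, map_smul, smul_eq_mul]
    have e3 : (⁅ξ, f • ξ - φ (φ Z)⁆ : VectorField I M) = (ξ f) • ξ - ⁅ξ, φ (φ Z)⁆ := by
      apply Derivation.ext; intro a
      simp only [Derivation.commutator_apply, Derivation.sub_apply, Derivation.smul_apply,
        map_sub, smul_eq_mul, Derivation.leibniz]
      ring
    have e4 : g X ((ξ f) • ξ - ⁅ξ, φ (φ Z)⁆) = ξ f * g X ξ - g X ⁅ξ, φ (φ Z)⁆ := by
      rw [map_sub, map_smul, smul_eq_mul]
    rw [e1, e2, e3, e4, map_sub, Derivation.leibniz, hφpair X (φ Z), hξpair X,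
      smul_eq_mul, smul_eq_mul]
    ring
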